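/- In the direction (⇒) of the transformation characterization: if vectors h^0, ..., h^m ∈ [0,1]^m satisfy h^0 = 0, h^j_i ≤ h^{j+1}_i for all j and i, Σ_i h^j_i = j for all j ∈ [m], and Σ_{k=1}^{j} h^k_i ≥ j − π(i) + 1 for all j, i ∈ [m], then for each j ∈ [m], h^j_i = 1 if π(i) ≤ j and h^j_i = 0 otherwise. -/
import Mathlib

lemma aux_gauss (j : ℕ) :
    ∑ p ∈ Finset.range j, ((j:ℝ) - p) = ∑ k ∈ Finset.Icc 1 j, (k:ℝ) := by
  induction j with
  | zero => simp
  | succ n ih =>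
    rw [Finset.sum_range_succ, Finset.sum_Icc_succ_top (by omega : 1 ≤ n+1)]
    have e : ∀ p ∈ Finset.range n, ((n+1:ℕ):ℝ) - p = ((n:ℝ) - p) + 1 := by
      intro p _; push_cast; ring
    rw [Finset.sum_congr rfl e, Finset.sum_add_distrib, ih, Finset.sum_const,
      Finset.card_range]
    push_cast; ring

/-- Direction (⇒) of the transformation characterization: if
`h^0, …, h^m ∈ [0,1]^m` satisfy `h^0 = 0`, `h^j ≤ h^{j+1}`, `∑_i h^j_i = j` for
`j ∈ [m]`, and `∑_{k=1}^j h^k_i ≥ j − π(i) + 1` for all `j, i ∈ [m]` (with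
`π(i) = (π i : ℕ) + 1`), then each `h^j` is the characteristic vector of
`{i : π(i) ≤ j}`. -/
theorem transformation_hard_direction (m : ℕ) (hm : 0 < m)
    (π : Equiv.Perm (Fin m)) (h : ℕ → Fin m → ℝ)
    (hbound : ∀ j ≤ m, ∀ i, 0 ≤ h j i ∧ h j i ≤ 1)
    (h0 : ∀ i, h 0 i = 0)
    (hmono : ∀ j, ∀ i, h j i ≤ h (j + 1) i)
    (hsum : ∀ j, 1 ≤ j → j ≤ m → ∑ i, h j i = (j : ℝ))
    (hineq : ∀ j, 1 ≤ j → j ≤ m → ∀ i : Fin m,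
      ∑ k ∈ Finset.Icc 1 j, h k i ≥ (j : ℝ) - ((π i : ℝ) + 1) + 1) :
    ∀ j, 1 ≤ j → j ≤ m → ∀ i : Fin m,
      h j i = if (π i : ℕ) < j then 1 else 0 := by
  have key : ∀ j, 1 ≤ j → j ≤ m → ∀ i : Fin m,
      ∑ k ∈ Finset.Icc 1 j, h k i = max 0 ((j:ℝ) - ((π i : ℕ):ℝ)) := by
    intro j hj1 hjm
    have hle : ∀ i ∈ Finset.univ, max 0 ((j:ℝ) - ((π i : ℕ):ℝ))
        ≤ ∑ k ∈ Finset.Icc 1 j, h k i := by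
      intro i _
      apply max_le
      · exact Finset.sum_nonneg fun k hk =>
          (hbound k (le_trans (Finset.mem_Icc.mp hk).2 hjm) i).1
      · have := hineq j hj1 hjm i
        have : ∑ k ∈ Finset.Icc 1 j, h k i ≥ (j:ℝ) - ((π i : ℕ):ℝ) := by
          push_cast at this ⊢; linarith
        linarith
    have hsumF : ∑ i, ∑ k ∈ Finset.Icc 1 j, h k i = ∑ k ∈ Finset.Icc 1 j, (k:ℝ) := by
      rw [Finset.sum_comm]
      refine Finset.sum_congr rfl fun k hk => ?_
      have hk' := Finset.mem_Icc.mp hk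
      exact hsum k hk'.1 (hk'.2.trans hjm)
    have hsumG : ∑ i : Fin m, max 0 ((j:ℝ) - ((π i : ℕ):ℝ))
        = ∑ k ∈ Finset.Icc 1 j, (k:ℝ) := by
      have h1 : ∑ i : Fin m, max 0 ((j:ℝ) - ((π i : ℕ):ℝ))
          = ∑ p : Fin m, max 0 ((j:ℝ) - ((p:ℕ):ℝ)) :=
        Equiv.sum_comp π (fun p : Fin m => max 0 ((j:ℝ) - ((p:ℕ):ℝ)))
      rw [h1, Fin.sum_univ_eq_sum_range (fun p => max 0 ((j:ℝ) - (p:ℝ))) m]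
      rw [← aux_gauss j]
      rw [← Finset.sum_subset (Finset.range_subset_range.mpr hjm)
        (fun p _ hpj => ?_)]
      · refine Finset.sum_congr rfl fun p hp => ?_
        have hpj : p < j := Finset.mem_range.mp hp
        rw [max_eq_right]
        have : (p:ℝ) ≤ (j:ℝ) := by exact_mod_cast hpj.le
        linarith
      · have hjp : j ≤ p := by simpa using hpj
        rw [max_eq_left]
        have : (j:ℝ) ≤ (p:ℝ) := by exact_mod_cast hjp
        linarith
    intro i
    have := (Finset.sum_eq_sum_iff_of_le hle).mp (hsumG.trans hsumF.symm) i
      (Finset.mem_univ i)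
    exact this.symm
  intro j hj1 hjm i
  obtain ⟨n, rfl⟩ : ∃ n, j = n + 1 := ⟨j - 1, by omega⟩
  have hstep : ∑ k ∈ Finset.Icc 1 (n+1), h k i
      = (∑ k ∈ Finset.Icc 1 n, h k i) + h (n+1) i :=
    Finset.sum_Icc_succ_top (by omega) _
  set pi := (π i : ℕ) with hpi
  by_cases hc : pi < n + 1
  · rw [if_pos hc]
    have hkey := key (n+1) (by omega) hjm i
    have hv1 : ∑ k ∈ Finset.Icc 1 (n+1), h k i = ((n:ℝ) + 1) - pi := by
      rw [hkey, max_eq_right]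
      · push_cast; ring
      · have : (pi:ℝ) ≤ (n:ℝ) := by exact_mod_cast (by omega : pi ≤ n)
        push_cast; linarith
    rcases Nat.eq_zero_or_pos n with hn | hn
    · subst hn
      have hpi0 : pi = 0 := by omega
      simp only [Finset.Icc_self, Finset.sum_singleton] at hv1
      rw [hv1, hpi0]; norm_num
    · have hv0 : ∑ k ∈ Finset.Icc 1 n, h k i = (n:ℝ) - pi := by
        rw [key n hn (by omega) i, max_eq_right]
        have : (pi:ℝ) ≤ (n:ℝ) := by exact_mod_cast (by omega : pi ≤ n)
        linarith
      rw [hstep, hv0] at hv1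
      linarith
  · rw [if_neg hc]
    have hkey := key (n+1) (by omega) hjm i
    have hv1 : ∑ k ∈ Finset.Icc 1 (n+1), h k i = 0 := by
      rw [hkey, max_eq_left]
      have : ((n:ℝ)+1) ≤ (pi:ℝ) := by exact_mod_cast (by omega : n+1 ≤ pi)
      push_cast; linarith
    have hle' : h (n+1) i ≤ ∑ k ∈ Finset.Icc 1 (n+1), h k i :=
      Finset.single_le_sum (f := fun k => h k i)
        (fun k hk => (hbound k (le_trans (Finset.mem_Icc.mp hk).2 hjm) i).1)
        (Finset.mem_Icc.mpr ⟨by omega, le_refl _⟩)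
    have hge := (hbound (n+1) hjm i).1
    linarith
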